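/- Fix M ≥ 1, P > 0, N > 0 and set A = 1 + M·P/N. Define e[L] = (1/(2M))·log(A) − (L/2)·log(M/(M − 1 + A^(−1/L))). Then lim_{L→∞} L·e[L] = (M−1)·(log A)²/(4·M²). Consequently, there exist constants c₁, c₂ > 0 and n₀ such that c₁/L ≤ e[L] ≤ c₂/L for all L ≥ n₀ (i.e., e[L] = Θ(1/L)), provided M ≥ 2. -/

import Mathlib

open Filter Real Topology Set

theorem stmt5 (M : ℕ) (P N : ℝ) (hM : 1 ≤ M) (hP : 0 < P) (hN : 0 < N) :
    let A : ℝ := 1 + M * P / N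
    let e : ℕ → ℝ := fun L =>
      (1 / (2 * (M : ℝ))) * Real.log A -
        ((L : ℝ) / 2) * Real.log ((M : ℝ) / ((M : ℝ) - 1 + A ^ (-(1 : ℝ) / L)))
    Filter.Tendsto (fun L : ℕ => (L : ℝ) * e L) Filter.atTop
      (nhds (((M : ℝ) - 1) * (Real.log A) ^ 2 / (4 * (M : ℝ) ^ 2))) ∧
    (2 ≤ M → ∃ c₁ c₂ : ℝ, ∃ n₀ : ℕ, 0 < c₁ ∧ 0 < c₂ ∧
      ∀ L : ℕ, n₀ ≤ L → c₁ / L ≤ e L ∧ e L ≤ c₂ / L) := by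
  intro A e
  have hm1 : (1:ℝ) ≤ (M:ℝ) := by exact_mod_cast hM
  have hm0 : (0:ℝ) < (M:ℝ) := lt_of_lt_of_le one_pos hm1
  set m : ℝ := (M : ℝ) with hm_def
  have hA1 : 1 < A := by
    have : 0 < m * P / N := by positivity
    simp only [A]; linarith
  have hA0 : 0 < A := by linarith
  set a := Real.log A with ha_def
  have ha0 : 0 < a := Real.log_pos hA1
  have hden : ∀ t : ℝ, 0 < m - 1 + Real.exp (-t) := fun t => by
    have := Real.exp_pos (-t); linarith
  set F : ℝ → ℝ := fun t => t / m - Real.log m + Real.log (m - 1 + Real.exp (-t)) with hF_def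
  set F' : ℝ → ℝ := fun t => 1 / m - Real.exp (-t) / (m - 1 + Real.exp (-t)) with hF'_def
  have hexp : ∀ t : ℝ, HasDerivAt (fun s : ℝ => Real.exp (-s)) (-Real.exp (-t)) t := by
    intro t
    have := (Real.hasDerivAt_exp (-t)).comp t (hasDerivAt_neg t)
    simp [mul_comm] at this; exact this
  have hvder : ∀ t : ℝ, HasDerivAt (fun s : ℝ => m - 1 + Real.exp (-s)) (-Real.exp (-t)) t :=
    fun t => (hexp t).const_add (m - 1)
  have hFderiv : ∀ t, HasDerivAt F (F' t) t := by
    intro t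
    have h2 : HasDerivAt (fun s : ℝ => Real.log (m - 1 + Real.exp (-s)))
        (-Real.exp (-t) / (m - 1 + Real.exp (-t))) t := (hvder t).log (hden t).ne'
    have h3 := (((hasDerivAt_id t).div_const m).sub_const (Real.log m)).add h2
    refine h3.congr_deriv ?_
    simp [hF'_def, sub_eq_add_neg, neg_div]
  have hF'0 : F' 0 = 0 := by
    simp [hF'_def]
  have hF'' : HasDerivAt F' ((m - 1) / m ^ 2) 0 := by
    have hu : HasDerivAt (fun s : ℝ => Real.exp (-s)) (-Real.exp (-(0:ℝ))) 0 := hexp 0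
    have hv : HasDerivAt (fun s : ℝ => m - 1 + Real.exp (-s)) (-Real.exp (-(0:ℝ))) 0 := hvder 0
    have hdiv : HasDerivAt (fun s : ℝ => Real.exp (-s) / (m - 1 + Real.exp (-s)))
        ((-Real.exp (-(0:ℝ)) * (m - 1 + Real.exp (-(0:ℝ))) -
          Real.exp (-(0:ℝ)) * (-Real.exp (-(0:ℝ)))) / (m - 1 + Real.exp (-(0:ℝ))) ^ 2) 0 :=
      hu.div hv (hden 0).ne'
    have h4 := (hasDerivAt_const (0:ℝ) (1/m)).sub hdiv
    refine h4.congr_deriv ?_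
    have hm' : m - 1 + Real.exp (-(0:ℝ)) = m := by simp
    rw [hm']
    field_simp
    simp; ring
  -- key limit : F t / t^2 → (m-1)/(2 m^2) as t → 0+
  have hslope : Tendsto (fun t => F' t / t) (𝓝[≠] (0:ℝ)) (𝓝 ((m - 1) / m ^ 2)) := by
    have := hasDerivAt_iff_tendsto_slope.mp hF''
    simpa [slope_fun_def_field, hF'0] using this
  have hdivlim : Tendsto (fun t => F' t / (2 * t)) (𝓝[>] (0:ℝ)) (𝓝 ((m - 1) / m ^ 2 / 2)) := by
    have h5 : Tendsto (fun t => F' t / t / 2) (𝓝[>] (0:ℝ)) (𝓝 ((m - 1) / m ^ 2 / 2)) :=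
      (hslope.mono_left (nhdsWithin_mono _ fun x hx => ne_of_gt hx)).div_const 2
    refine h5.congr fun t => ?_
    rw [div_div, mul_comm]
  have hkey : Tendsto (fun t => F t / t ^ 2) (𝓝[>] (0:ℝ)) (𝓝 ((m - 1) / (2 * m ^ 2))) := by
    have hF0 : F 0 = 0 := by
      have hm' : m - 1 + Real.exp (-(0:ℝ)) = m := by simp
      simp [hF_def, hm']
    have := HasDerivAt.lhopital_zero_nhdsGT (f := F) (f' := F') (g := fun t : ℝ => t ^ 2)
      (g' := fun t : ℝ => 2 * t)
      (Eventually.of_forall hFderiv)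
      (Eventually.of_forall fun x => by simpa using hasDerivAt_pow 2 x)
      (eventually_mem_nhdsWithin.mono fun x (hx : x ∈ Ioi (0:ℝ)) => by have : (0:ℝ) < x := hx; positivity)
      (by
        have h6 : Tendsto F (𝓝[>] (0:ℝ)) (𝓝 (F 0)) :=
          (hFderiv 0).continuousAt.continuousWithinAt
        rwa [hF0] at h6)
      (by simpa using ((continuous_pow 2).tendsto (0:ℝ)).mono_left nhdsWithin_le_nhds)
      hdivlim
    convert this using 2
    ring
  -- sequence a / L tends to 0 from the right
  have hseq : Tendsto (fun L : ℕ => a / L) atTop (𝓝[>] (0:ℝ)) := by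
    rw [tendsto_nhdsWithin_iff]
    constructor
    · exact tendsto_const_div_atTop_nhds_zero_nat a
    · filter_upwards [eventually_ge_atTop 1] with L hL
      have : (0:ℝ) < L := by exact_mod_cast hL
      exact div_pos ha0 this
  have hmain : Tendsto (fun L : ℕ => (a ^ 2 / 2) * (F (a / L) / (a / L) ^ 2)) atTop
      (𝓝 ((a ^ 2 / 2) * ((m - 1) / (2 * m ^ 2)))) := (hkey.comp hseq).const_mul _
  have hval : (a ^ 2 / 2) * ((m - 1) / (2 * m ^ 2)) = (m - 1) * a ^ 2 / (4 * m ^ 2) := by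
    field_simp; ring
  have hEq : ∀ᶠ L : ℕ in atTop,
      (a ^ 2 / 2) * (F (a / L) / (a / L) ^ 2) = (L : ℝ) * e L := by
    filter_upwards [eventually_ge_atTop 1] with L hL
    have hL0 : (0:ℝ) < (L:ℝ) := by exact_mod_cast hL
    have hpow : A ^ (-(1:ℝ) / L) = Real.exp (-(a / L)) := by
      rw [Real.rpow_def_of_pos hA0, ← ha_def]
      congr 1; ring
    have hlog : Real.log (m / (m - 1 + Real.exp (-(a / L))))
        = Real.log m - Real.log (m - 1 + Real.exp (-(a / L))) :=
      Real.log_div hm0.ne' (hden _).ne'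
    simp only [e, ← hm_def, hpow, hlog, hF_def]
    field_simp
    ring
  have h1 : Tendsto (fun L : ℕ => (L : ℝ) * e L) atTop (𝓝 ((m - 1) * a ^ 2 / (4 * m ^ 2))) := by
    rw [← hval]
    exact hmain.congr' hEq
  refine ⟨h1, ?_⟩
  intro hM2
  have hm2 : (2:ℝ) ≤ m := by rw [hm_def]; exact_mod_cast hM2
  set ℓ := (m - 1) * a ^ 2 / (4 * m ^ 2) with hℓ_def
  have hℓ0 : 0 < ℓ := by
    have : 0 < m - 1 := by linarith
    positivity
  have h2 : ∀ᶠ L : ℕ in atTop, (L : ℝ) * e L ∈ Ioo (ℓ / 2) (2 * ℓ) :=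
    h1 (Ioo_mem_nhds (by linarith) (by linarith))
  obtain ⟨n₀, hn₀⟩ := (h2.and (eventually_ge_atTop 1)).exists_forall_of_atTop
  refine ⟨ℓ / 2, 2 * ℓ, n₀, by linarith, by linarith, ?_⟩
  intro L hL
  obtain ⟨⟨hlo, hhi⟩, hL1⟩ := hn₀ L hL
  have hL0 : (0:ℝ) < (L:ℝ) := by exact_mod_cast hL1
  constructor
  · rw [div_le_iff₀ hL0]
    nlinarith [hlo]
  · rw [le_div_iff₀ hL0]
    nlinarith [hhi]
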